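/- Let f : ℝ⁵ → ℝ, with arguments written f(x, y, t, p, r), be continuously differentiable and satisfy, for all (x, y, t, p, r) ∈ ℝ⁵ and all q ∈ ℝ, the identity f_x + f_t·p + f_p·q + f_r·f − p·f − e^{2t}·r = 0, where subscripts denote partial derivatives. Then there exists a function K : ℝ → ℝ such that f(x, y, t, p, r)² = (r² + K(y))·e^{2t} for all (x, y, t, p, r) ∈ ℝ⁵. (This is the statement that every hyperbolic equation t_{xy} = f(x, y, t, t_x, t_y) possessing the y-integral I = t_{xx} − (1/2)t_x² − (1/2)e^{2t} has the form t_{xy} = e^t·√(t_y² + K(y)), which coincides with u_{xy} = e^u√(u_y² − 4) up to a point transformation in y.) -/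

import Mathlib

/-- every hyperbolic equation `t_{xy} = f(x,y,t,t_x,t_y)` possessing the
y-integral `I = t_{xx} - (1/2)t_x² - (1/2)e^{2t}` satisfies `f² = (t_y² + K(y)) e^{2t}`. -/
theorem stmt_16 (f : ℝ → ℝ → ℝ → ℝ → ℝ → ℝ)
    (hf : ContDiff ℝ 1
      (fun v : ℝ × ℝ × ℝ × ℝ × ℝ => f v.1 v.2.1 v.2.2.1 v.2.2.2.1 v.2.2.2.2))
    (hI : ∀ x y t p r : ℝ, ∀ q : ℝ,
      deriv (fun u => f u y t p r) x
        + deriv (fun u => f x y u p r) t * p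
        + deriv (fun u => f x y t u r) p * q
        + deriv (fun u => f x y t p u) r * f x y t p r
        - p * f x y t p r - Real.exp (2 * t) * r = 0) :
    ∃ K : ℝ → ℝ, ∀ x y t p r : ℝ, (f x y t p r)^2 = (r^2 + K y) * Real.exp (2 * t) := by
  have hD := hf.differentiable one_ne_zero
  -- sections are differentiable
  have hdx : ∀ y t p r : ℝ, Differentiable ℝ (fun u => f u y t p r) := by
    intro y t p r
    exact hD.comp (by fun_prop : Differentiable ℝ (fun u : ℝ => ((u, y, t, p, r) : ℝ×ℝ×ℝ×ℝ×ℝ)))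
  have hdt : ∀ x y p r : ℝ, Differentiable ℝ (fun u => f x y u p r) := by
    intro x y p r
    exact hD.comp (by fun_prop : Differentiable ℝ (fun u : ℝ => ((x, y, u, p, r) : ℝ×ℝ×ℝ×ℝ×ℝ)))
  have hdp : ∀ x y t r : ℝ, Differentiable ℝ (fun u => f x y t u r) := by
    intro x y t r
    exact hD.comp (by fun_prop : Differentiable ℝ (fun u : ℝ => ((x, y, t, u, r) : ℝ×ℝ×ℝ×ℝ×ℝ)))
  have hdr : ∀ x y t p : ℝ, Differentiable ℝ (fun u => f x y t p u) := by
    intro x y t p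
    exact hD.comp (by fun_prop : Differentiable ℝ (fun u : ℝ => ((x, y, t, p, u) : ℝ×ℝ×ℝ×ℝ×ℝ)))
  -- f_p = 0
  have hp0 : ∀ x y t p r : ℝ, deriv (fun u => f x y t u r) p = 0 := by
    intro x y t p r
    have h0 := hI x y t p r 0
    have h1 := hI x y t p r 1
    linarith
  -- f constant in p
  have hpc : ∀ x y t p r : ℝ, f x y t p r = f x y t 0 r := by
    intro x y t p r
    exact is_const_of_deriv_eq_zero (hdp x y t r) (fun u => hp0 x y t u r) p 0
  -- rewrite hI at p arbitrary, q = 0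
  have hI' : ∀ x y t p r : ℝ,
      deriv (fun u => f u y t 0 r) x
        + deriv (fun u => f x y u 0 r) t * p
        + deriv (fun u => f x y t 0 u) r * f x y t 0 r
        - p * f x y t 0 r - Real.exp (2 * t) * r = 0 := by
    intro x y t p r
    have h := hI x y t p r 0
    have e1 : (fun u => f u y t p r) = (fun u => f u y t 0 r) := funext fun u => hpc u y t p r
    have e2 : (fun u => f x y u p r) = (fun u => f x y u 0 r) := funext fun u => hpc x y u p r
    have e3 : (fun u => f x y t p u) = (fun u => f x y t 0 u) := funext fun u => hpc x y t p u
    rw [e1, e2, e3, hpc x y t p r] at h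
    linarith
  -- f_t = f (at p = 0)
  have hB : ∀ x y t r : ℝ, deriv (fun u => f x y u 0 r) t = f x y t 0 r := by
    intro x y t r
    have h0 := hI' x y t 0 r
    have h1 := hI' x y t 1 r
    linarith
  -- the "A" part
  have hA : ∀ x y t r : ℝ,
      deriv (fun u => f u y t 0 r) x
        + deriv (fun u => f x y t 0 u) r * f x y t 0 r - Real.exp (2 * t) * r = 0 := by
    intro x y t r
    have h0 := hI' x y t 0 r
    linarith
  -- exponential solution in t
  have hexp : ∀ x y t r : ℝ, f x y t 0 r = f x y 0 0 r * Real.exp t := by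
    intro x y t r
    have hφ : ∀ s : ℝ, HasDerivAt (fun s => f x y s 0 r * Real.exp (-s)) 0 s := by
      intro s
      have h1 : HasDerivAt (fun u => f x y u 0 r) (f x y s 0 r) s := by
        rw [← hB x y s r]
        exact (hdt x y 0 r s).hasDerivAt
      have h2 : HasDerivAt (fun s : ℝ => Real.exp (-s)) (-Real.exp (-s)) s := by
        simpa using (hasDerivAt_neg s).exp
      have : HasDerivAt (fun s => f x y s 0 r * Real.exp (-s))
          (f x y s 0 r * Real.exp (-s) + f x y s 0 r * -Real.exp (-s)) s := h1.mul h2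
      convert this using 1
      ring
    have hc : f x y t 0 r * Real.exp (-t) = f x y 0 0 r * Real.exp (-0) := by
      exact is_const_of_deriv_eq_zero (fun s => (hφ s).differentiableAt)
        (fun s => (hφ s).deriv) t 0
    simp only [neg_zero, Real.exp_zero, mul_one, Real.exp_neg] at hc
    field_simp at hc
    linarith [hc]
  -- derivatives scale by exp t
  have hAx : ∀ x y t r : ℝ, deriv (fun u => f u y t 0 r) x
      = deriv (fun u => f u y 0 0 r) x * Real.exp t := by
    intro x y t r
    have e : (fun u => f u y t 0 r) = (fun u => f u y 0 0 r * Real.exp t) :=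
      funext fun u => hexp u y t r
    rw [e, deriv_mul_const ((hdx y 0 0 r) x)]
  have hAr : ∀ x y t r : ℝ, deriv (fun u => f x y t 0 u) r
      = deriv (fun u => f x y 0 0 u) r * Real.exp t := by
    intro x y t r
    have e : (fun u => f x y t 0 u) = (fun u => f x y 0 0 u * Real.exp t) :=
      funext fun u => hexp x y t u
    rw [e, deriv_mul_const ((hdr x y 0 0) r)]
  -- C_x = 0 and C * C_r = r
  have hCx : ∀ x y r : ℝ, deriv (fun u => f u y 0 0 r) x = 0 := by
    intro x y r
    have h0 := hA x y 0 r
    have h1 := hA x y (Real.log 2) r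
    rw [hAx, hAr, hexp] at h0 h1
    rw [Real.exp_log (by norm_num : (0:ℝ) < 2)] at h1
    have e2 : Real.exp (2 * Real.log 2) = 4 := by
      rw [two_mul, Real.exp_add, Real.exp_log (by norm_num : (0:ℝ) < 2)]; norm_num
    rw [e2] at h1
    simp [Real.exp_zero] at h0
    linarith
  have hCr : ∀ x y r : ℝ, deriv (fun u => f x y 0 0 u) r * f x y 0 0 r = r := by
    intro x y r
    have h0 := hA x y 0 r
    rw [hAx, hAr, hexp] at h0
    have hx0 := hCx x y r
    simp [Real.exp_zero] at h0
    linarith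
  -- C^2 - r^2 constant in r
  have hsq : ∀ x y r : ℝ, (f x y 0 0 r)^2 = r^2 + (f x y 0 0 0)^2 := by
    intro x y r
    have hψ : ∀ s : ℝ, HasDerivAt (fun u => (f x y 0 0 u)^2 - u^2) 0 s := by
      intro s
      have h1 : HasDerivAt (fun u => (f x y 0 0 u)^2)
          ((2:ℕ) * (f x y 0 0 s)^(2-1) * deriv (fun u => f x y 0 0 u) s) s :=
        ((hdr x y 0 0) s).hasDerivAt.pow 2
      have h2 : HasDerivAt (fun u : ℝ => u^2) ((2:ℕ) * s^(2-1)) s := hasDerivAt_pow 2 s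
      have : HasDerivAt (fun u => (f x y 0 0 u)^2 - u^2)
          ((2:ℕ) * (f x y 0 0 s)^(2-1) * deriv (fun u => f x y 0 0 u) s - (2:ℕ) * s^(2-1)) s :=
        h1.sub h2
      convert this using 1
      have := hCr x y s
      push_cast
      nlinarith [hCr x y s]
    have hc : (f x y 0 0 r)^2 - r^2 = (f x y 0 0 0)^2 - 0^2 :=
      is_const_of_deriv_eq_zero (fun s => (hψ s).differentiableAt)
        (fun s => (hψ s).deriv) r 0
    nlinarith [hc]
  -- C(x,y,0) independent of x
  have hx0 : ∀ x y : ℝ, f x y 0 0 0 = f 0 y 0 0 0 := by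
    intro x y
    exact is_const_of_deriv_eq_zero (hdx y 0 0 0) (fun u => hCx u y 0) x 0
  refine ⟨fun y => (f 0 y 0 0 0)^2, fun x y t p r => ?_⟩
  have : f x y t p r = f x y 0 0 r * Real.exp t := by rw [hpc, hexp]
  rw [this, mul_pow, hsq, hx0, two_mul, Real.exp_add]
  ring
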